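/- If |w − nπ| ≥ π/4 for every integer n, then e^{|Im w|} < 4|sin w|. -/

import Mathlib

open scoped Real

set_option maxHeartbeats 1600000 in
theorem exp_abs_im_lt_four_abs_sin (w : ℂ)
    (h : ∀ n : ℤ, π / 4 ≤ ‖w - n * π‖) :
    Real.exp |w.im| < 4 * ‖Complex.sin w‖ := by
  obtain ⟨x, y, rfl⟩ : ∃ x y : ℝ, w = Complex.mk x y := ⟨w.re, w.im, rfl⟩
  set w : ℂ := Complex.mk x y with hw
  have hxre : w.re = x := rfl
  have hyim : w.im = y := rfl
  rw [hyim]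
  -- |sin w|^2 = sin^2 x + sinh^2 y
  have hA : (‖Complex.sin w‖) ^ 2 = Real.sin x ^ 2 + Real.sinh y ^ 2 := by
    have hw2 : Complex.sin w =
        Complex.ofReal (Real.sin x * Real.cosh y) +
          Complex.ofReal (Real.cos x * Real.sinh y) * Complex.I := by
      rw [Complex.sin_eq, hxre, hyim]; push_cast; ring
    rw [hw2, Complex.sq_norm, Complex.normSq_add_mul_I]
    have h1 := Real.sin_sq_add_cos_sq x
    have h2 := Real.cosh_sq y
    nlinarith
  have habs := norm_nonneg (Complex.sin w)
  have hexp := Real.exp_pos |y|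
  rcases le_or_gt |y| (Real.log 2 / 2) with hc | hc
  · -- small imaginary part: use the distance hypothesis
    have hlog2 : (0:ℝ) < Real.log 2 := Real.log_pos one_lt_two
    have hpi := Real.pi_pos
    obtain ⟨n, hd⟩ : ∃ n : ℤ, |x - n * π| ≤ π / 2 := by
      refine ⟨round (x / π), ?_⟩
      have h1 : |x / π - round (x / π)| ≤ 1 / 2 := abs_sub_round (x / π)
      have h2 : x - round (x / π) * π = (x / π - round (x / π)) * π := by
        field_simp
      rw [h2, abs_mul, abs_of_pos hpi]
      nlinarith
    have hdist := h n
    have hre : (w - n * π).re = x - n * π := by simp [hw]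
    have him : (w - n * π).im = y := by simp [hw]
    have hsq : (π / 4) ^ 2 ≤ (x - n * π) ^ 2 + y ^ 2 := by
      have h1 := Complex.sq_norm (w - n * π)
      rw [Complex.normSq_apply, hre, him] at h1
      nlinarith [norm_nonneg (w - n * π)]
    -- |sin x| = |sin (x - nπ)| ≥ (2/π)|x - nπ|
    have hs1 : |Real.sin x| = |Real.sin (x - n * π)| := by
      have h1 : Real.sin ((x - n * π) + n * π) = (-1) ^ n * Real.sin (x - n * π) :=
        Real.sin_add_int_mul_pi _ n
      rw [show (x - n * π) + n * π = x by ring] at h1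
      rcases Int.even_or_odd n with he | ho
      · rw [h1, he.neg_one_zpow, one_mul]
      · rw [h1, ho.neg_one_zpow, neg_one_mul, abs_neg]
    have hs2 : 2 / π * |x - n * π| ≤ |Real.sin (x - n * π)| :=
      Real.mul_abs_le_abs_sin hd
    have hs2' : 2 * |x - n * π| ≤ π * |Real.sin x| := by
      rw [← hs1, div_mul_eq_mul_div, div_le_iff₀ hpi] at hs2
      linarith [hs2]
    -- square it: π² sin²x ≥ 4 (x - nπ)²
    have hsin : π ^ 2 * Real.sin x ^ 2 ≥ 4 * (x - n * π) ^ 2 := by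
      have h0 : (0:ℝ) ≤ 2 * |x - n * π| := by positivity
      have h3 := mul_self_le_mul_self h0 hs2'
      have e1 : |Real.sin x| * |Real.sin x| = Real.sin x ^ 2 := by
        rw [← abs_mul, abs_mul_self]; ring
      have e2 : |x - n * π| * |x - n * π| = (x - n * π) ^ 2 := by
        rw [← abs_mul, abs_mul_self]; ring
      nlinarith
    -- numeric bounds
    have hexp2 : Real.exp |y| ^ 2 ≤ 2 := by
      have e1 : Real.exp |y| ^ 2 = Real.exp (|y| + |y|) := by
        rw [Real.exp_add]; ring
      rw [e1]
      calc Real.exp (|y| + |y|) ≤ Real.exp (Real.log 2) :=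
            Real.exp_le_exp.2 (by linarith)
        _ = 2 := Real.exp_log two_pos
    have hy2 : y ^ 2 ≤ 0.13 := by
      have hl2 : Real.log 2 < 0.6931471808 := Real.log_two_lt_d9
      have h1 : |y| ≤ 0.35 := by linarith
      nlinarith [abs_nonneg y, sq_abs y]
    have hpi2 : π > 3.14 := by linarith [Real.pi_gt_d6]
    have hsinx : Real.sin x ^ 2 > 1 / 8 := by
      have h4 : (x - n * π) ^ 2 ≥ (π / 4) ^ 2 - y ^ 2 := by linarith
      nlinarith [sq_nonneg (x - n * π), sq_nonneg (Real.sin x), mul_pos hpi hpi]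
    nlinarith [sq_nonneg (Real.sinh y)]
  · -- large imaginary part: use sinh
    have hsinh : Real.sinh |y| ≤ ‖Complex.sin w‖ := by
      have h1 : Real.sinh |y| = |Real.sinh y| := (Real.abs_sinh y).symm
      nlinarith [sq_abs (Real.sinh y), abs_nonneg (Real.sinh y), sq_nonneg (Real.sin x)]
    have h2 : Real.exp |y| < 4 * Real.sinh |y| := by
      rw [Real.sinh_eq]
      have h3 : Real.exp (Real.log 2) < Real.exp (|y| + |y|) :=
        Real.exp_lt_exp.2 (by linarith)
      rw [Real.exp_log two_pos, Real.exp_add] at h3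
      have h5 : Real.exp (- |y|) = (Real.exp |y|)⁻¹ := Real.exp_neg _
      rw [h5]
      have h6 : Real.exp |y| * (Real.exp |y|)⁻¹ = 1 := mul_inv_cancel₀ (ne_of_gt hexp)
      nlinarith
    linarith
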